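/- Let U : ℝ → ℝ be continuous and strictly increasing. Then the following are equivalent: (i) there exists a function μ : ℝ × ℝ → ℝ such that for all y, c, d ∈ ℝ, U(y+c) − U(c) = μ(c,d)·(U(y+d) − U(d)); (ii) either there exist A, B ∈ ℝ such that U(x) = A·x + B for all x ∈ ℝ, or there exist A, B, C ∈ ℝ such that U(x) = A + B·exp(C·x) for all x ∈ ℝ. -/

import Mathlib

lemma additive_cont_linear (g : ℝ → ℝ) (hadd : ∀ x y, g (x + y) = g x + g y)
    (hc : Continuous g) : ∀ x, g x = g 1 * x := by
  have h0 : g 0 = 0 := by have := hadd 0 0; simpa using this.symm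
  let f : ℝ →+ ℝ := ⟨⟨g, h0⟩, hadd⟩
  intro x
  have hx : f (x • (1:ℝ)) = x • f 1 := by
    rw [← AddMonoidHom.coe_toRealLinearMap f hc]; exact (f.toRealLinearMap hc).map_smul x 1
  simp only [smul_eq_mul, mul_one] at hx; rw [mul_comm]; exact hx

theorem stmt_2 (U : ℝ → ℝ) (hU_cont : Continuous U) (hU_mono : StrictMono U) :
    (∃ μ : ℝ × ℝ → ℝ, ∀ y c d : ℝ,
        U (y + c) - U c = μ (c, d) * (U (y + d) - U d)) ↔
    ((∃ A B : ℝ, ∀ x : ℝ, U x = A * x + B) ∨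
      (∃ A B C : ℝ, ∀ x : ℝ, U x = A + B * Real.exp (C * x))) := by
  constructor
  · rintro ⟨μ, hμ⟩
    set g : ℝ → ℝ := fun x => U x - U 0 with hg
    have hgc : Continuous g := hU_cont.sub continuous_const
    have hg1 : 0 < g 1 := by
      have := hU_mono (show (0:ℝ) < 1 by norm_num); simp [hg]; linarith
    set m : ℝ → ℝ := fun c => μ (c, 0) with hm
    have key : ∀ y c : ℝ, g (y + c) = g c + m c * g y := by
      intro y c
      have := hμ y c 0
      simp only [add_zero] at this
      simp only [hg, hm]
      linarith
    -- symmetry gives m c = 1 + k * g c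
    set k : ℝ := (m 1 - 1) / g 1 with hk
    have hmc : ∀ c, m c = 1 + k * g c := by
      intro c
      have h1 : g (1 + c) = g c + m c * g 1 := key 1 c
      have h2 : g (c + 1) = g 1 + m 1 * g c := key c 1
      rw [add_comm] at h1
      have : m c * g 1 = g 1 + (m 1 - 1) * g c := by linarith
      rw [hk]; field_simp [hg1.ne']
      linarith
    have key2 : ∀ y c : ℝ, g (y + c) = g c + g y + k * g c * g y := by
      intro y c; rw [key y c, hmc c]; ring
    by_cases hk0 : k = 0
    · left
      have hadd : ∀ x y : ℝ, g (x + y) = g x + g y := by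
        intro x y; rw [key2 x y, hk0]; ring
      have hlin := additive_cont_linear g hadd hgc
      refine ⟨U 1 - U 0, U 0, fun x => ?_⟩
      have := hlin x; simp only [hg] at this; linarith
    · right
      set h : ℝ → ℝ := fun x => 1 + k * g x with hh
      have hmul : ∀ x y, h (x + y) = h x * h y := by
        intro x y; simp only [hh, key2 x y]; ring
      have hh0 : h 0 = 1 := by simp [hh, hg]
      have hne : ∀ x, h x ≠ 0 := by
        intro x hx
        have := hmul x (-x)
        simp [hx, hh0] at this
      have hpos : ∀ x, 0 < h x := by
        intro x
        have e : h x = h (x/2) * h (x/2) := by rw [← hmul]; norm_num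
        have hle : (0:ℝ) ≤ h x := by rw [e]; exact mul_self_nonneg _
        exact lt_of_le_of_ne hle (Ne.symm (hne x))
      have hhc : Continuous h := continuous_const.add (continuous_const.mul hgc)
      set φ : ℝ → ℝ := fun x => Real.log (h x) with hφ
      have hφadd : ∀ x y, φ (x + y) = φ x + φ y := by
        intro x y; simp only [hφ, hmul]; exact Real.log_mul (hne x) (hne y)
      have hφc : Continuous φ := hhc.log hne
      have hφlin := additive_cont_linear φ hφadd hφc
      refine ⟨U 0 - 1/k, 1/k, φ 1, fun x => ?_⟩
      have hexp : Real.exp (φ 1 * x) = h x := by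
        rw [← hφlin x]; exact Real.exp_log (hpos x)
      have : h x = 1 + k * (U x - U 0) := by simp [hh, hg]
      rw [hexp, this]
      field_simp
      ring
  · rintro (⟨A, B, hAB⟩ | ⟨A, B, C, hABC⟩)
    · exact ⟨fun _ => 1, fun y c d => by simp [hAB]; ring⟩
    · refine ⟨fun p => Real.exp (C * (p.1 - p.2)), fun y c d => ?_⟩
      have hd := Real.exp_ne_zero (C * d)
      simp only [hABC, mul_add, Real.exp_add, mul_sub, Real.exp_sub]
      field_simp
      ring
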